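/- (Counterexample) Consider the planar system ẋ₁ = −x₂/2, ẋ₂ = −x₁³ + 1 and h(x) = x₂ − x₁². Then ḣ(x) = x₁(x₂ − x₁²) + 1; in particular ḣ = 1 > 0 on ∂C = {h = 0}, so C = {h ≥ 0} is forward invariant; yet for every r > 0, inf{ḣ(x) : h(x) = r} = −∞, so there is no extended class K function α with ḣ ≥ −α(h) on C. -/

import Mathlib

lemma hderiv (x : ℝ × ℝ) :
    HasFDerivAt (fun x : ℝ × ℝ => x.2 - x.1 ^ 2)
      (ContinuousLinearMap.snd ℝ ℝ ℝ - (2 * x.1) • ContinuousLinearMap.fst ℝ ℝ ℝ) x := by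
  have h1 : HasFDerivAt (fun x : ℝ × ℝ => x.2) (ContinuousLinearMap.snd ℝ ℝ ℝ) x :=
    hasFDerivAt_snd
  have h2 : HasFDerivAt (fun x : ℝ × ℝ => x.1 ^ 2)
      ((2 * x.1) • ContinuousLinearMap.fst ℝ ℝ ℝ) x := by
    have := (hasDerivAt_pow 2 x.1).comp_hasFDerivAt x (hasFDerivAt_fst (𝕜 := ℝ))
    simpa [pow_one, Function.comp_def] using this
  exact h1.sub h2

lemma fd_eq (x : ℝ × ℝ) (v : ℝ × ℝ) :
    fderiv ℝ (fun x : ℝ × ℝ => x.2 - x.1 ^ 2) x v = v.2 - 2 * x.1 * v.1 := by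
  rw [(hderiv x).fderiv]
  simp [mul_comm, mul_assoc]

/-- Counterexample: for ẋ₁ = −x₂/2, ẋ₂ = −x₁³+1 and h = x₂ − x₁², one has
ḣ = x₁(x₂ − x₁²)+1, ḣ = 1 on {h = 0}, C = {h ≥ 0} is forward invariant, yet
ḣ is unbounded below on every level set {h = r}, r > 0, so no (extended)
class K function α gives ḣ ≥ −α(h) on C. -/
theorem stmt15 :
    let f : ℝ × ℝ → ℝ × ℝ := fun x => (-x.2 / 2, -x.1 ^ 3 + 1)
    let h : ℝ × ℝ → ℝ := fun x => x.2 - x.1 ^ 2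
    (∀ x, fderiv ℝ h x (f x) = x.1 * (x.2 - x.1 ^ 2) + 1) ∧
    (∀ x, h x = 0 → fderiv ℝ h x (f x) = 1) ∧
    (∀ x : ℝ → ℝ × ℝ, (∀ t, HasDerivAt x (f (x t)) t) → 0 ≤ h (x 0) →
      ∀ t ≥ (0:ℝ), 0 ≤ h (x t)) ∧
    (∀ r : ℝ, 0 < r → ¬ BddBelow ((fun x => fderiv ℝ h x (f x)) '' {x | h x = r})) ∧
    ¬ ∃ α : ℝ → ℝ, Continuous α ∧ StrictMono α ∧ α 0 = 0 ∧
      ∀ x, 0 ≤ h x → fderiv ℝ h x (f x) ≥ -α (h x) := by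
  intro f h
  have key : ∀ x, fderiv ℝ h x (f x) = x.1 * (x.2 - x.1 ^ 2) + 1 := by
    intro x
    rw [show fderiv ℝ h x (f x) = fderiv ℝ (fun x : ℝ × ℝ => x.2 - x.1 ^ 2) x (f x) from rfl,
      fd_eq]
    show (-x.1 ^ 3 + 1) - 2 * x.1 * (-x.2 / 2) = _
    ring
  have hub : ∀ r : ℝ, 0 < r →
      ¬ BddBelow ((fun x => fderiv ℝ h x (f x)) '' {x | h x = r}) := by
    rintro r hr ⟨m, hm⟩
    obtain ⟨a, ha⟩ : ∃ a : ℝ, a * r + 1 < m := by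
      refine ⟨(m - 2) / r, ?_⟩
      rw [div_mul_cancel₀ _ hr.ne']
      linarith
    have hmem : ((a, a ^ 2 + r) : ℝ × ℝ) ∈ {x : ℝ × ℝ | h x = r} := by
      simp [h]
    have h2 := hm ⟨_, hmem, rfl⟩
    simp only [key] at h2
    simp at h2
    linarith
  refine ⟨key, ?_, ?_, hub, ?_⟩
  · intro x hx
    rw [key x, show x.2 - x.1 ^ 2 = h x from rfl, hx]; ring
  · -- forward invariance
    intro x hx h0 t ht
    set c : ℝ → ℝ := fun t => (x t).1 with hc
    have hxd : Differentiable ℝ x := fun t => (hx t).differentiableAt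
    have hccont : Continuous c := continuous_fst.comp hxd.continuous
    set y : ℝ → ℝ := fun t => h (x t) with hy
    have hy' : ∀ t, HasDerivAt y (c t * y t + 1) t := by
      intro t
      have := (hderiv (x t)).comp_hasDerivAt t (hx t)
      have e : (ContinuousLinearMap.snd ℝ ℝ ℝ - (2 * (x t).1) • ContinuousLinearMap.fst ℝ ℝ ℝ)
          (f (x t)) = c t * y t + 1 := by
        simp [c, y, h, f]
        ring
      rw [e] at this
      exact this
    set I : ℝ → ℝ := fun t => ∫ s in (0:ℝ)..t, c s with hI
    have hI' : ∀ t, HasDerivAt I (c t) t := fun t =>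
      (hccont.integral_hasStrictDerivAt 0 t).hasDerivAt
    set g : ℝ → ℝ := fun t => y t * Real.exp (-I t) with hg
    have hg' : ∀ t, HasDerivAt g (Real.exp (-I t)) t := by
      intro t
      have he : HasDerivAt (fun t => Real.exp (-I t)) (Real.exp (-I t) * (-c t)) t :=
        by have h3 : HasDerivAt (fun t => -I t) (-c t) t := (hI' t).neg; exact h3.exp
      have := (hy' t).mul he
      convert this using 1
      · rfl
      · rfl
      · rfl
      ring
    have hmono : StrictMono g := by
      apply strictMono_of_deriv_pos
      intro t
      rw [(hg' t).deriv]
      exact Real.exp_pos _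
    have hg0 : 0 ≤ g 0 := by
      have hI0 : I 0 = 0 := by simp [I]
      simp only [g, hI0, neg_zero, Real.exp_zero, mul_one]
      exact h0
    have hgt : 0 ≤ g t := by
      rcases eq_or_lt_of_le ht with rfl | ht'
      · exact hg0
      · exact le_of_lt (lt_of_le_of_lt hg0 (hmono ht'))
    have hyt : y t = g t * Real.exp (I t) := by
      rw [hg, mul_assoc, ← Real.exp_add]
      simp
    show 0 ≤ y t
    rw [hyt]
    positivity
  · rintro ⟨α, -, -, -, hbd⟩
    refine hub 1 one_pos ⟨-α 1, ?_⟩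
    rintro v ⟨x, hx, rfl⟩
    rw [Set.mem_setOf_eq] at hx
    have := hbd x (by rw [hx]; norm_num)
    rw [hx] at this
    exact this
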